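/- arXiv:1701.01720 — 3 statements merged into one kernel-verified Lean document; each statement's English description precedes it below -/
import Mathlib

section
/- Conversely, if f is a Laurent polynomial in two variables such that V(f) ⊂ (ℂ*)² is smooth, reduced and irreducible, and the logarithmic Gauss map γ_f is constant on V(f), then up to multiplication by a monomial, f = z^a w^b - c for some c ∈ ℂ* and coprime integers a, b. -/
/- A Laurent polynomial in two variables is encoded as an element of the
group algebra `AddMonoidAlgebra ℂ (ℤ × ℤ)`, i.e. a finitely supported family of
coefficients indexed by exponent vectors `(i, j) ∈ ℤ²`. -/

/-- Evaluation of a Laurent polynomial at `(z, w) ∈ (ℂ*)²`. -/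
noncomputable def lEval (F : AddMonoidAlgebra ℂ (ℤ × ℤ)) (z w : ℂ) : ℂ :=
  Finsupp.sum F.coeff fun m c => c * z ^ m.1 * w ^ m.2

/-- `z·∂_z f`, the first coordinate of the logarithmic Gauss map (numerator). -/
noncomputable def lDlogz (F : AddMonoidAlgebra ℂ (ℤ × ℤ)) (z w : ℂ) : ℂ :=
  Finsupp.sum F.coeff fun m c => (m.1 : ℂ) * c * z ^ m.1 * w ^ m.2

/-- `w·∂_w f`, the second coordinate of the logarithmic Gauss map. -/
noncomputable def lDlogw (F : AddMonoidAlgebra ℂ (ℤ × ℤ)) (z w : ℂ) : ℂ :=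
  Finsupp.sum F.coeff fun m c => (m.2 : ℂ) * c * z ^ m.1 * w ^ m.2

noncomputable section

namespace LogGaussAux

open Finsupp

variable {M : Type*} [AddCommMonoid M] [LinearOrder M] [IsOrderedCancelAddMonoid M]

theorem supp_ne {N : Type*} {A : AddMonoidAlgebra ℂ N} (h : A ≠ 0) : A.coeff.support.Nonempty :=
  Finsupp.support_nonempty_iff.mpr (by simpa using h)

private theorem coeff_mul_max (A B : AddMonoidAlgebra ℂ M) (hA : A ≠ 0) (hB : B ≠ 0) :
    (A * B).coeff (A.coeff.support.max' (supp_ne hA)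
        + B.coeff.support.max' (supp_ne hB))
      = A.coeff (A.coeff.support.max' (supp_ne hA))
        * B.coeff (B.coeff.support.max' (supp_ne hB)) := by
  classical
  set α := A.coeff.support.max' (supp_ne hA) with hα
  set β := B.coeff.support.max' (supp_ne hB) with hβ
  have hαmem : α ∈ A.coeff.support := Finset.max'_mem _ _
  have hβmem : β ∈ B.coeff.support := Finset.max'_mem _ _
  rw [AddMonoidAlgebra.coeff_mul]
  simp only [Finsupp.sum]
  rw [Finset.sum_eq_single_of_mem α hαmem]
  · rw [Finset.sum_eq_single_of_mem β hβmem]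
    · rw [if_pos rfl]
    · intro v hv hvβ
      have hlt : v < β := lt_of_le_of_ne (Finset.le_max' _ _ hv) hvβ
      rw [if_neg]
      exact fun h => (add_lt_add_right hlt α).ne h
  · intro u hu huα
    apply Finset.sum_eq_zero
    intro v hv
    have h1 : u < α := lt_of_le_of_ne (Finset.le_max' _ _ hu) huα
    have h2 : v ≤ β := Finset.le_max' _ _ hv
    rw [if_neg]
    exact fun h => (add_lt_add_of_lt_of_le h1 h2).ne h

private theorem coeff_mul_min (A B : AddMonoidAlgebra ℂ M) (hA : A ≠ 0) (hB : B ≠ 0) :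
    (A * B).coeff (A.coeff.support.min' (supp_ne hA)
        + B.coeff.support.min' (supp_ne hB))
      = A.coeff (A.coeff.support.min' (supp_ne hA))
        * B.coeff (B.coeff.support.min' (supp_ne hB)) := by
  classical
  set α := A.coeff.support.min' (supp_ne hA) with hα
  set β := B.coeff.support.min' (supp_ne hB) with hβ
  have hαmem : α ∈ A.coeff.support := Finset.min'_mem _ _
  have hβmem : β ∈ B.coeff.support := Finset.min'_mem _ _
  rw [AddMonoidAlgebra.coeff_mul]
  simp only [Finsupp.sum]
  rw [Finset.sum_eq_single_of_mem α hαmem]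
  · rw [Finset.sum_eq_single_of_mem β hβmem]
    · rw [if_pos rfl]
    · intro v hv hvβ
      have hlt : β < v := lt_of_le_of_ne (Finset.min'_le _ _ hv) (Ne.symm hvβ)
      rw [if_neg]
      exact fun h => (add_lt_add_right hlt α).ne' h
  · intro u hu huα
    apply Finset.sum_eq_zero
    intro v hv
    have h1 : α < u := lt_of_le_of_ne (Finset.min'_le _ _ hu) (Ne.symm huα)
    have h2 : β ≤ v := Finset.min'_le _ _ hv
    rw [if_neg]
    exact fun h => (add_lt_add_of_lt_of_le h1 h2).ne' h

private theorem mul_ne_zero'' {A B : AddMonoidAlgebra ℂ M} (hA : A ≠ 0) (hB : B ≠ 0) :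
    A * B ≠ 0 := by
  intro h
  have hc := coeff_mul_max A B hA hB
  rw [h] at hc
  have h1 : A.coeff (A.coeff.support.max' (supp_ne hA)) ≠ 0 :=
    Finsupp.mem_support_iff.mp (Finset.max'_mem _ _)
  have h2 : B.coeff (B.coeff.support.max' (supp_ne hB)) ≠ 0 :=
    Finsupp.mem_support_iff.mp (Finset.max'_mem _ _)
  exact mul_ne_zero h1 h2 (by simpa using hc.symm)

private theorem max'_supp_mul {A B : AddMonoidAlgebra ℂ M} (hA : A ≠ 0) (hB : B ≠ 0) :
    (A * B).coeff.support.max' (supp_ne (mul_ne_zero'' hA hB))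
      = A.coeff.support.max' (supp_ne hA)
        + B.coeff.support.max' (supp_ne hB) := by
  apply le_antisymm
  · apply Finset.max'_le
    intro s hs
    obtain ⟨u, hu, v, hv, rfl⟩ := Finset.mem_add.mp (AddMonoidAlgebra.support_coeff_mul_subset A B hs)
    exact add_le_add (Finset.le_max' _ _ hu) (Finset.le_max' _ _ hv)
  · apply Finset.le_max'
    rw [Finsupp.mem_support_iff, coeff_mul_max A B hA hB]
    exact mul_ne_zero (Finsupp.mem_support_iff.mp (Finset.max'_mem _ _))
      (Finsupp.mem_support_iff.mp (Finset.max'_mem _ _))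

private theorem min'_supp_mul {A B : AddMonoidAlgebra ℂ M} (hA : A ≠ 0) (hB : B ≠ 0) :
    (A * B).coeff.support.min' (supp_ne (mul_ne_zero'' hA hB))
      = A.coeff.support.min' (supp_ne hA)
        + B.coeff.support.min' (supp_ne hB) := by
  apply le_antisymm
  · apply Finset.min'_le
    rw [Finsupp.mem_support_iff, coeff_mul_min A B hA hB]
    exact mul_ne_zero (Finsupp.mem_support_iff.mp (Finset.min'_mem _ _))
      (Finsupp.mem_support_iff.mp (Finset.min'_mem _ _))
  · apply Finset.le_min'
    intro s hs
    obtain ⟨u, hu, v, hv, rfl⟩ := Finset.mem_add.mp (AddMonoidAlgebra.support_coeff_mul_subset A B hs)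
    exact add_le_add (Finset.min'_le _ _ hu) (Finset.min'_le _ _ hv)

/-- units of `ℂ[M]` are single monomials. -/
theorem isUnit_single_shape {U : AddMonoidAlgebra ℂ M} (h : IsUnit U) :
    ∃ (m : M) (c : ℂ), c ≠ 0 ∧ U = AddMonoidAlgebra.single m c := by
  obtain ⟨V, hUV⟩ := h.exists_right_inv
  have hU : U ≠ 0 := by rintro rfl; simp at hUV
  have hV : V ≠ 0 := by rintro rfl; simp at hUV
  set αU := U.coeff.support.max' (supp_ne hU) with hαU
  set μU := U.coeff.support.min' (supp_ne hU) with hμU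
  set αV := V.coeff.support.max' (supp_ne hV) with hαV
  set μV := V.coeff.support.min' (supp_ne hV) with hμV
  have hone : (1 : AddMonoidAlgebra ℂ M) = AddMonoidAlgebra.single 0 1 := AddMonoidAlgebra.one_def
  have hsupp1 : (U * V).coeff.support = {0} := by
    rw [hUV, hone]; exact Finsupp.support_single_ne_zero _ one_ne_zero
  have hzero : ∀ y ∈ (U * V).coeff.support, y = 0 := fun y hy =>
    Finset.mem_singleton.mp (hsupp1 ▸ hy)
  have hzmem : (0 : M) ∈ (U * V).coeff.support := hsupp1.symm ▸ Finset.mem_singleton_self 0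
  have hmax : αU + αV = 0 := by
    rw [← max'_supp_mul hU hV]
    exact le_antisymm (Finset.max'_le _ _ _ fun y hy => (hzero y hy).le)
      (Finset.le_max' _ _ hzmem)
  have hmin : μU + μV = 0 := by
    rw [← min'_supp_mul hU hV]
    exact le_antisymm (Finset.min'_le _ _ hzmem)
      (Finset.le_min' _ _ _ fun y hy => (hzero y hy).ge)
  have hUle : μU ≤ αU := Finset.min'_le _ _ (Finset.max'_mem _ _)
  have hVle : μV ≤ αV := Finset.min'_le _ _ (Finset.max'_mem _ _)
  have hmid : αU + μV = 0 := le_antisymm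
    (by calc αU + μV ≤ αU + αV := add_le_add_right hVle _
        _ = 0 := hmax)
    (by calc (0:M) = μU + μV := hmin.symm
        _ ≤ αU + μV := add_le_add_left hUle _)
  have hUeq : μU = αU := by
    have : μU + μV = αU + μV := by rw [hmin, hmid]
    exact add_right_cancel this
  have hsub : U.coeff.support ⊆ {αU} := by
    intro m hm
    have h1 : m ≤ αU := Finset.le_max' _ _ hm
    have h2 : αU ≤ m := hUeq ▸ Finset.min'_le _ _ hm
    simp [le_antisymm h1 h2]
  refine ⟨αU, U.coeff αU, ?_, AddMonoidAlgebra.ext (Finsupp.support_subset_singleton.mp hsub)⟩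
  exact Finsupp.mem_support_iff.mp (Finset.max'_mem _ _)

/-- a nonzero divisor whose multiple has smaller support divides as a scalar. -/
theorem dvd_support_subset {A G : AddMonoidAlgebra ℂ M} (hA : A ≠ 0) (hd : A ∣ G)
    (hs : G.coeff.support ⊆ A.coeff.support) : ∃ c : ℂ, G = c • A := by
  obtain ⟨H, rfl⟩ := hd
  by_cases hH : H = 0
  · exact ⟨0, by simp [hH]⟩
  have hAH : A * H ≠ 0 := mul_ne_zero'' hA hH
  set αA := A.coeff.support.max' (supp_ne hA) with hαA
  set μA := A.coeff.support.min' (supp_ne hA) with hμA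
  set αH := H.coeff.support.max' (supp_ne hH) with hαH
  set μH := H.coeff.support.min' (supp_ne hH) with hμH
  have hmax : αA + αH ≤ αA := by
    rw [← max'_supp_mul hA hH]
    calc (A*H).coeff.support.max' _ ≤ A.coeff.support.max' (supp_ne hA) :=
          Finset.max'_subset _ hs
      _ = αA := rfl
  have hmin : μA ≤ μA + μH := by
    rw [← min'_supp_mul hA hH]
    exact Finset.min'_subset _ hs
  have h1 : αH ≤ 0 := by
    have := hmax
    nth_rewrite 2 [← add_zero αA] at this
    exact le_of_add_le_add_left this
  have h2 : (0:M) ≤ μH := by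
    have := hmin
    nth_rewrite 1 [← add_zero μA] at this
    exact le_of_add_le_add_left this
  have hHle : μH ≤ αH := Finset.min'_le _ _ (Finset.max'_mem _ _)
  have hμ0 : μH = 0 := le_antisymm (hHle.trans h1) h2
  have hα0 : αH = 0 := le_antisymm h1 (h2.trans hHle)
  have hsub : H.coeff.support ⊆ {0} := by
    intro m hm
    have hx : m ≤ αH := Finset.le_max' _ _ hm
    have hy : μH ≤ m := Finset.min'_le _ _ hm
    rw [hα0] at hx; rw [hμ0] at hy
    simp [le_antisymm hx hy]
  have hHs : H = AddMonoidAlgebra.single 0 (H.coeff 0) :=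
    AddMonoidAlgebra.ext (Finsupp.support_subset_singleton.mp hsub)
  refine ⟨H.coeff 0, ?_⟩
  rw [hHs]
  ext x
  rw [AddMonoidAlgebra.coeff_mul_single_zero]
  rw [AddMonoidAlgebra.coeff_smul_apply, smul_eq_mul, mul_comm]
  simp [AddMonoidAlgebra.coeff_single]

def toLexE : (ℤ × ℤ) ≃+ (ℤ ×ₗ ℤ) :=
  { toLex with map_add' := fun _ _ => rfl }

def Φ : AddMonoidAlgebra ℂ (ℤ × ℤ) ≃ₐ[ℂ] AddMonoidAlgebra ℂ (ℤ ×ₗ ℤ) :=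
  AddMonoidAlgebra.domCongr ℂ ℂ toLexE

theorem unit_is_single {U : AddMonoidAlgebra ℂ (ℤ × ℤ)} (h : IsUnit U) :
    ∃ (m : ℤ × ℤ) (c : ℂ), c ≠ 0 ∧ U = AddMonoidAlgebra.single m c := by
  have h' : IsUnit (Φ U) := h.map Φ
  obtain ⟨m, c, hc, hU⟩ := isUnit_single_shape h'
  refine ⟨toLexE.symm m, c, hc, Φ.injective ?_⟩
  rw [hU]
  have : Φ (AddMonoidAlgebra.single (toLexE.symm m) c)
      = AddMonoidAlgebra.single (toLexE (toLexE.symm m)) c :=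
    AddMonoidAlgebra.domCongr_single toLexE _ _
  rw [this, AddEquiv.apply_symm_apply]

theorem dvd_smul_of_support_subset {A G : AddMonoidAlgebra ℂ (ℤ × ℤ)} (hA : A ≠ 0)
    (hd : A ∣ G) (hs : G.coeff.support ⊆ A.coeff.support) : ∃ c : ℂ, G = c • A := by
  have hA' : Φ A ≠ 0 := fun h => hA (by simpa using Φ.injective (by simpa using h))
  have hd' : Φ A ∣ Φ G := map_dvd Φ hd
  have hs' : (Φ G).coeff.support ⊆ (Φ A).coeff.support := by
    show (AddMonoidAlgebra.domCongr ℂ ℂ toLexE G).coeff.support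
      ⊆ (AddMonoidAlgebra.domCongr ℂ ℂ toLexE A).coeff.support
    rw [AddMonoidAlgebra.domCongr_support, AddMonoidAlgebra.domCongr_support]
    exact Finset.map_subset_map.mpr hs
  obtain ⟨c, hc⟩ := dvd_support_subset hA' hd' hs'
  refine ⟨c, Φ.injective ?_⟩
  rw [map_smul, hc]

/-- units lemma in the one-variable Laurent ring -/
theorem unit_is_single_int {U : AddMonoidAlgebra ℂ ℤ} (h : IsUnit U) :
    ∃ (m : ℤ) (c : ℂ), c ≠ 0 ∧ U = AddMonoidAlgebra.single m c :=
  isUnit_single_shape h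

theorem isUnit_single {M : Type*} [AddCommGroup M] (m : M) {c : ℂ} (hc : c ≠ 0) :
    IsUnit (AddMonoidAlgebra.single m c : AddMonoidAlgebra ℂ M) := by
  apply IsUnit.of_mul_eq_one (AddMonoidAlgebra.single (-m) c⁻¹)
  rw [AddMonoidAlgebra.single_mul_single, add_neg_cancel, mul_inv_cancel₀ hc]
  exact AddMonoidAlgebra.one_def.symm

/-- the evaluation monoid hom on exponents -/
def expChar (z w : ℂ) (hz : z ≠ 0) (hw : w ≠ 0) : Multiplicative (ℤ × ℤ) →* ℂ where
  toFun m := z ^ (Multiplicative.toAdd m).1 * w ^ (Multiplicative.toAdd m).2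
  map_one' := by simp
  map_mul' m n := by
    show z ^ ((Multiplicative.toAdd m).1 + (Multiplicative.toAdd n).1)
        * w ^ ((Multiplicative.toAdd m).2 + (Multiplicative.toAdd n).2) = _
    rw [zpow_add₀ hz, zpow_add₀ hw]; ring

def evalHom (z w : ℂ) (hz : z ≠ 0) (hw : w ≠ 0) : AddMonoidAlgebra ℂ (ℤ × ℤ) →ₐ[ℂ] ℂ :=
  AddMonoidAlgebra.lift ℂ ℂ (ℤ × ℤ) (expChar z w hz hw)

theorem lEval_eq_evalHom {z w : ℂ} (hz : z ≠ 0) (hw : w ≠ 0) (F : AddMonoidAlgebra ℂ (ℤ × ℤ)) :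
    lEval F z w = evalHom z w hz hw F := by
  rw [evalHom, AddMonoidAlgebra.lift_apply]
  apply Finsupp.sum_congr
  intro m _
  rw [smul_eq_mul]
  show _ = F.coeff m * (z ^ m.1 * w ^ m.2)
  ring

theorem lEval_mul {z w : ℂ} (hz : z ≠ 0) (hw : w ≠ 0) (A B : AddMonoidAlgebra ℂ (ℤ × ℤ)) :
    lEval (A * B) z w = lEval A z w * lEval B z w := by
  simp only [lEval_eq_evalHom hz hw, map_mul]

theorem lEval_single (z w : ℂ) (m : ℤ × ℤ) (c : ℂ) :
    lEval (AddMonoidAlgebra.single m c) z w = c * z ^ m.1 * w ^ m.2 := by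
  rw [lEval, AddMonoidAlgebra.coeff_single]
  exact Finsupp.sum_single_index (by simp)

theorem lEval_single_ne_zero {z w : ℂ} (hz : z ≠ 0) (hw : w ≠ 0) (m : ℤ × ℤ) {c : ℂ}
    (hc : c ≠ 0) : lEval (AddMonoidAlgebra.single m c) z w ≠ 0 := by
  rw [lEval_single]
  exact mul_ne_zero (mul_ne_zero hc (zpow_ne_zero _ hz)) (zpow_ne_zero _ hw)

/-- exponent embedding ℕ² → ℤ² -/
def expHom : ((Fin 2) →₀ ℕ) →+ ℤ × ℤ where
  toFun v := ((v 0 : ℤ), (v 1 : ℤ))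
  map_zero' := by simp
  map_add' u v := by simp [Prod.ext_iff]

theorem expHom_injective : Function.Injective expHom := by
  intro u v h
  simp only [expHom, AddMonoidHom.coe_mk, ZeroHom.coe_mk, Prod.ext_iff, Nat.cast_inj] at h
  ext i
  fin_cases i
  · exact h.1
  · exact h.2

def ι : MvPolynomial (Fin 2) ℂ →+* AddMonoidAlgebra ℂ (ℤ × ℤ) :=
  AddMonoidAlgebra.mapDomainRingHom ℂ expHom

theorem ι_apply (P : MvPolynomial (Fin 2) ℂ) : ι P = AddMonoidAlgebra.mapDomain expHom P := rfl

theorem ι_injective : Function.Injective ι :=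
  AddMonoidAlgebra.mapDomain_injective expHom_injective

theorem ι_monomial (v : (Fin 2) →₀ ℕ) (c : ℂ) :
    ι (MvPolynomial.monomial v c) = AddMonoidAlgebra.single (expHom v) c := by
  rw [ι_apply, ← MvPolynomial.single_eq_monomial]
  exact AddMonoidAlgebra.mapDomain_single

theorem support_ι (P : MvPolynomial (Fin 2) ℂ) :
    (ι P).coeff.support = P.support.map ⟨expHom, expHom_injective⟩ := by
  classical
  rw [ι_apply, AddMonoidAlgebra.coeff_mapDomain,
    Finsupp.mapDomain_support_of_injective expHom_injective]
  ext x; simp [MvPolynomial.support]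

theorem ι_X0 : ι (MvPolynomial.X 0) = AddMonoidAlgebra.single ((1 : ℤ), (0 : ℤ)) 1 := by
  rw [show (MvPolynomial.X 0 : MvPolynomial (Fin 2) ℂ)
      = MvPolynomial.monomial (Finsupp.single 0 1) 1 from rfl, ι_monomial]
  congr 1
  simp [expHom, Finsupp.single_apply]

theorem ι_X1 : ι (MvPolynomial.X 1) = AddMonoidAlgebra.single ((0 : ℤ), (1 : ℤ)) 1 := by
  rw [show (MvPolynomial.X 1 : MvPolynomial (Fin 2) ℂ)
      = MvPolynomial.monomial (Finsupp.single 1 1) 1 from rfl, ι_monomial]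
  congr 1
  simp [expHom, Finsupp.single_apply]

theorem lEval_ι {z w : ℂ} (hz : z ≠ 0) (hw : w ≠ 0) (P : MvPolynomial (Fin 2) ℂ) :
    lEval (ι P) z w = MvPolynomial.eval (fun i => if i = 0 then z else w) P := by
  classical
  rw [ι_apply, lEval, AddMonoidAlgebra.coeff_mapDomain]
  rw [Finsupp.sum_mapDomain_index (by simp) (by intros; ring)]
  rw [MvPolynomial.eval_eq']
  rw [Finsupp.sum]
  apply Finset.sum_congr rfl
  intro v _
  rw [Fin.prod_univ_two]
  norm_num
  show MvPolynomial.coeff v P * z ^ ((v 0 : ℤ)) * w ^ ((v 1 : ℤ))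
      = MvPolynomial.coeff v P * (z ^ v 0 * w ^ v 1)
  rw [zpow_natCast, zpow_natCast]
  ring

theorem single_mul_eq_mapDomain (n : ℤ × ℤ) (A : AddMonoidAlgebra ℂ (ℤ × ℤ)) :
    AddMonoidAlgebra.single n 1 * A = AddMonoidAlgebra.mapDomain (fun m => n + m) A := by
  ext x
  obtain ⟨y, rfl⟩ : ∃ y, x = n + y := ⟨x - n, by abel⟩
  rw [AddMonoidAlgebra.coeff_single_mul_apply, AddMonoidAlgebra.coeff_mapDomain,
    Finsupp.mapDomain_apply (add_right_injective n), one_mul, neg_add_cancel_left]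

theorem exists_clear (A : AddMonoidAlgebra ℂ (ℤ × ℤ)) :
    ∃ (n : ℤ × ℤ) (P : MvPolynomial (Fin 2) ℂ),
      AddMonoidAlgebra.single n 1 * A = ι P := by
  classical
  set N1 : ℕ := A.coeff.support.sup fun m => (-m.1).toNat with hN1
  set N2 : ℕ := A.coeff.support.sup fun m => (-m.2).toNat with hN2
  set n : ℤ × ℤ := ((N1 : ℤ), (N2 : ℤ)) with hn
  have key : ∀ m ∈ A.coeff.support, 0 ≤ (n + m).1 ∧ 0 ≤ (n + m).2 := by
    intro m hm
    constructor
    · have h1 : -m.1 ≤ ((-m.1).toNat : ℤ) := Int.self_le_toNat _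
      have h2 : ((-m.1).toNat : ℤ) ≤ (N1 : ℤ) := by
        exact_mod_cast Finset.le_sup (f := fun m => (-m.1).toNat) hm
      show 0 ≤ (N1 : ℤ) + m.1
      linarith
    · have h1 : -m.2 ≤ ((-m.2).toNat : ℤ) := Int.self_le_toNat _
      have h2 : ((-m.2).toNat : ℤ) ≤ (N2 : ℤ) := by
        exact_mod_cast Finset.le_sup (f := fun m => (-m.2).toNat) hm
      show 0 ≤ (N2 : ℤ) + m.2
      linarith
  set d : ℤ × ℤ → ((Fin 2) →₀ ℕ) :=
    fun m => Finsupp.single 0 m.1.toNat + Finsupp.single 1 m.2.toNat with hd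
  refine ⟨n, AddMonoidAlgebra.mapDomain d (AddMonoidAlgebra.single n 1 * A), ?_⟩
  rw [ι_apply]
  apply AddMonoidAlgebra.ext
  rw [AddMonoidAlgebra.coeff_mapDomain, AddMonoidAlgebra.coeff_mapDomain, ← Finsupp.mapDomain_comp]
  have hsupp : ∀ x ∈ (AddMonoidAlgebra.single n 1 * A).coeff.support, (expHom ∘ d) x = x := by
    intro x hx
    rw [single_mul_eq_mapDomain] at hx
    obtain ⟨m, hm, rfl⟩ := Finset.mem_image.mp (Finsupp.mapDomain_support hx)
    obtain ⟨hk1, hk2⟩ := key m hm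
    show expHom (d (n + m)) = n + m
    have e0 : d (n + m) 0 = (n + m).1.toNat := by simp [hd, Finsupp.single_apply]
    have e1 : d (n + m) 1 = (n + m).2.toNat := by simp [hd, Finsupp.single_apply]
    show (((d (n+m)) 0 : ℤ), ((d (n+m)) 1 : ℤ)) = n + m
    rw [e0, e1, Int.toNat_of_nonneg hk1, Int.toNat_of_nonneg hk2]
  calc (AddMonoidAlgebra.single n 1 * A).coeff
      = Finsupp.mapDomain id (AddMonoidAlgebra.single n 1 * A).coeff := by
        rw [Finsupp.mapDomain_id]
    _ = Finsupp.mapDomain (expHom ∘ d) (AddMonoidAlgebra.single n 1 * A).coeff := by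
        apply Finsupp.mapDomain_congr
        intro x hx
        exact (hsupp x hx).symm

open MvPolynomial

theorem prime_X_mv (i : Fin 2) : Prime (X i : MvPolynomial (Fin 2) ℂ) := by
  have h0 : Prime (X 0 : MvPolynomial (Fin 2) ℂ) := by
    have := MulEquiv.prime_iff (MvPolynomial.finSuccEquiv ℂ 1).toMulEquiv
      (p := (X 0 : MvPolynomial (Fin 2) ℂ))
    rw [← this]
    show Prime ((MvPolynomial.finSuccEquiv ℂ 1) (X 0))
    rw [finSuccEquiv_X_zero]
    exact Polynomial.prime_X
  fin_cases i
  · exact h0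
  · have h1 : Prime ((MvPolynomial.renameEquiv ℂ (Equiv.swap (0 : Fin 2) 1)).toMulEquiv
        (X 0 : MvPolynomial (Fin 2) ℂ)) :=
      (MulEquiv.prime_iff (MvPolynomial.renameEquiv ℂ (Equiv.swap (0:Fin 2) 1)).toMulEquiv).mpr h0
    have e : (MvPolynomial.renameEquiv ℂ (Equiv.swap (0 : Fin 2) 1)).toMulEquiv
        (X 0 : MvPolynomial (Fin 2) ℂ) = X 1 := by
      show rename (Equiv.swap (0 : Fin 2) 1) (X 0) = X 1
      rw [rename_X, Equiv.swap_apply_left]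
    rw [e] at h1
    exact h1

theorem isUnit_ι_single (n : ℤ × ℤ) : IsUnit (AddMonoidAlgebra.single n (1:ℂ)
    : AddMonoidAlgebra ℂ (ℤ × ℤ)) := isUnit_single n one_ne_zero

/-- if a monomial-free divisor of f has unit image, it is a unit -/
theorem unit_factor {f f' : MvPolynomial (Fin 2) ℂ} (hf0 : ¬ X 0 ∣ f) (hf1 : ¬ X 1 ∣ f)
    (hdvd : f' ∣ f) (hu : IsUnit (ι f')) : IsUnit f' := by
  classical
  obtain ⟨m, c, hc, hfι⟩ := unit_is_single hu
  have hf'ne : f' ≠ 0 := by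
    rintro rfl
    rw [map_zero] at hfι
    exact hc (by simpa using hfι.symm)
  obtain ⟨v, hv⟩ := (MvPolynomial.support_nonempty.mpr hf'ne).exists_mem
  have hsuppι : (ι f').coeff.support = {m} := by
    rw [hfι]; exact Finsupp.support_single_ne_zero _ hc
  have hsub : f'.support ⊆ {v} := by
    intro v' hv'
    have h1 : expHom v' ∈ (ι f').coeff.support := by
      rw [support_ι]; exact Finset.mem_map_of_mem _ hv'
    have h2 : expHom v ∈ (ι f').coeff.support := by
      rw [support_ι]; exact Finset.mem_map_of_mem _ hv
    rw [hsuppι, Finset.mem_singleton] at h1 h2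
    rw [Finset.mem_singleton]
    exact expHom_injective (h1.trans h2.symm)
  have hf's : f' = monomial v (MvPolynomial.coeff v f') := by
    rw [← MvPolynomial.single_eq_monomial]
    exact AddMonoidAlgebra.ext (Finsupp.support_subset_singleton.mp hsub)
  have hcoeff : MvPolynomial.coeff v f' ≠ 0 := MvPolynomial.mem_support_iff.mp hv
  by_cases hv0 : v = 0
  · subst hv0
    rw [hf's, ← MvPolynomial.C_apply]
    exact hcoeff.isUnit.map MvPolynomial.C
  · exfalso
    obtain ⟨i, hi⟩ : ∃ i, v i ≠ 0 := by
      by_contra h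
      push_neg at h
      exact hv0 (Finsupp.ext h)
    have hXdvd : X i ∣ f' := by
      rw [hf's]
      exact MvPolynomial.X_dvd_monomial.mpr (Or.inr hi)
    have : X i ∣ f := hXdvd.trans hdvd
    fin_cases i
    · exact hf0 this
    · exact hf1 this

theorem exists_irred_rep {F : AddMonoidAlgebra ℂ (ℤ × ℤ)} (hirr : Irreducible F) :
    ∃ (n : ℤ × ℤ) (f : MvPolynomial (Fin 2) ℂ),
      Irreducible f ∧ ¬ IsUnit (ι f) ∧ F = AddMonoidAlgebra.single n 1 * ι f := by
  classical
  obtain ⟨n0, P, hP⟩ := exists_clear F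
  have hPne : P ≠ 0 := by
    rintro rfl
    rw [map_zero] at hP
    obtain ⟨u, hu⟩ := isUnit_ι_single n0
    apply hirr.ne_zero
    calc F = 1 * F := (one_mul F).symm
      _ = (↑u⁻¹ * ↑u) * F := by rw [Units.inv_mul]
      _ = ↑u⁻¹ * (↑u * F) := mul_assoc _ _ _
      _ = ↑u⁻¹ * 0 := by rw [hu, hP]
      _ = 0 := mul_zero _
  obtain ⟨α, Q, hXQ, hPQ⟩ := WfDvdMonoid.max_power_factor hPne (prime_X_mv 0).irreducible
  have hQne : Q ≠ 0 := by rintro rfl; rw [mul_zero] at hPQ; exact hPne hPQ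
  obtain ⟨β, f, hXf1, hQf⟩ := WfDvdMonoid.max_power_factor hQne (prime_X_mv 1).irreducible
  have hXf0 : ¬ X 0 ∣ f := fun h => hXQ (hQf ▸ (h.mul_left _))
  have hPf : P = (X 0) ^ α * (X 1) ^ β * f := by rw [hPQ, hQf]; ring
  -- image of the pure powers
  have hι : ι P = AddMonoidAlgebra.single (((α : ℤ), (β : ℤ))) 1 * ι f := by
    rw [hPf, map_mul, map_mul, map_pow, map_pow, ι_X0, ι_X1,
      AddMonoidAlgebra.single_pow, AddMonoidAlgebra.single_pow, one_pow, one_pow,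
      AddMonoidAlgebra.single_mul_single, one_mul]
    congr 2
    · show (α • ((1:ℤ),(0:ℤ))) + (β • ((0:ℤ),(1:ℤ))) = ((α : ℤ), (β : ℤ))
      simp [Prod.ext_iff]
  set m : ℤ × ℤ := ((α : ℤ), (β : ℤ)) - n0 with hm
  have hFrep : F = AddMonoidAlgebra.single m 1 * ι f := by
    have h1 : AddMonoidAlgebra.single (-n0) (1:ℂ) * (AddMonoidAlgebra.single n0 1 * F)
        = F := by
      rw [← mul_assoc, AddMonoidAlgebra.single_mul_single, neg_add_cancel, one_mul,
        ← AddMonoidAlgebra.one_def, one_mul]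
    rw [← h1, hP, hι, ← mul_assoc, AddMonoidAlgebra.single_mul_single, one_mul]
    congr 2
    rw [hm]
    abel
  have hιf_nonunit : ¬ IsUnit (ι f) := by
    intro h
    exact hirr.not_isUnit (hFrep ▸ ((isUnit_single m one_ne_zero).mul h))
  refine ⟨m, f, ?_, hιf_nonunit, hFrep⟩
  constructor
  · intro h
    exact hιf_nonunit (h.map ι)
  · intro f₁ f₂ hf
    have hF2 : F = (AddMonoidAlgebra.single m 1 * ι f₁) * ι f₂ := by
      rw [hFrep, hf, map_mul, mul_assoc]
    rcases hirr.isUnit_or_isUnit hF2 with h | h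
    · left
      have hι1 : IsUnit (ι f₁) := by
        have : ι f₁ = AddMonoidAlgebra.single (-m) 1 * (AddMonoidAlgebra.single m 1 * ι f₁) := by
          rw [← mul_assoc, AddMonoidAlgebra.single_mul_single, neg_add_cancel, one_mul,
            ← AddMonoidAlgebra.one_def, one_mul]
        rw [this]
        exact (isUnit_single (-m) one_ne_zero).mul h
      exact unit_factor hXf0 hXf1 (Dvd.intro f₂ (hf.symm)) hι1
    · right
      exact unit_factor hXf0 hXf1 (Dvd.intro_left f₁ (hf.symm)) h

open MvPolynomial

/-- The main geometric input: the support of `F` lies on a complex affine line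
with direction not both-zero. -/
theorem support_on_line {F : AddMonoidAlgebra ℂ (ℤ × ℤ)}
    (hirr : Irreducible F)
    (hne : ∃ z w : ℂ, z ≠ 0 ∧ w ≠ 0 ∧ lEval F z w = 0)
    (hsmooth : ∀ z w : ℂ, z ≠ 0 → w ≠ 0 → lEval F z w = 0 →
      ¬(lDlogz F z w = 0 ∧ lDlogw F z w = 0))
    (hconst : ∀ z w z' w' : ℂ, z ≠ 0 → w ≠ 0 → z' ≠ 0 → w' ≠ 0 →
      lEval F z w = 0 → lEval F z' w' = 0 →
      lDlogz F z w * lDlogw F z' w' = lDlogz F z' w' * lDlogw F z w) :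
    ∃ p q c₀ : ℂ, ¬(p = 0 ∧ q = 0) ∧
      ∀ m ∈ F.coeff.support, q * (m.1 : ℂ) - p * (m.2 : ℂ) = c₀ := by
  classical
  obtain ⟨z₀, w₀, hz₀, hw₀, hF₀⟩ := hne
  set p : ℂ := lDlogz F z₀ w₀ with hp
  set q : ℂ := lDlogw F z₀ w₀ with hq
  have hpq : ¬(p = 0 ∧ q = 0) := hsmooth z₀ w₀ hz₀ hw₀ hF₀
  -- the auxiliary Laurent polynomial G
  set G : AddMonoidAlgebra ℂ (ℤ × ℤ) :=
    AddMonoidAlgebra.ofCoeff (Finsupp.onFinset F.coeff.support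
      (fun m => (q * (m.1 : ℂ) - p * (m.2 : ℂ)) * F.coeff m)
      (fun a ha => by
        rw [Finsupp.mem_support_iff]
        intro h0
        exact ha (by show (q * (a.1 : ℂ) - p * (a.2 : ℂ)) * F.coeff a = 0; rw [h0, mul_zero]))) with hG
  have hGapp : ∀ m, G.coeff m = (q * (m.1 : ℂ) - p * (m.2 : ℂ)) * F.coeff m := fun m => rfl
  have hGsupp : G.coeff.support ⊆ F.coeff.support := by
    intro x hx
    rw [Finsupp.mem_support_iff] at hx ⊢
    intro h0
    exact hx (by rw [hGapp, h0, mul_zero])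
  have hlEvalG : ∀ z w : ℂ, lEval G z w = q * lDlogz F z w - p * lDlogw F z w := by
    intro z w
    rw [lEval, Finsupp.sum_of_support_subset G.coeff hGsupp _ (fun m _ => by rw [zero_mul, zero_mul])]
    rw [lDlogz, lDlogw, Finsupp.sum, Finsupp.sum, Finset.mul_sum, Finset.mul_sum,
      ← Finset.sum_sub_distrib]
    apply Finset.sum_congr rfl
    intro m _
    rw [hGapp]
    ring
  have hGvanish : ∀ z w : ℂ, z ≠ 0 → w ≠ 0 → lEval F z w = 0 → lEval G z w = 0 := by
    intro z w hz hw h0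
    rw [hlEvalG]
    have := hconst z w z₀ w₀ hz hw hz₀ hw₀ h0 hF₀
    rw [← hp, ← hq] at this
    linear_combination this
  -- representation of F by an irreducible polynomial
  obtain ⟨nf, f, hf_irr, hιf_nonunit, hFrep⟩ := exists_irred_rep hirr
  have hf_ne : f ≠ 0 := hf_irr.ne_zero
  -- clear G
  obtain ⟨nG, gP, hgP⟩ := exists_clear G
  -- the point-function associated to `x : Fin 2 → ℂ`
  have hxeval : ∀ (z w : ℂ), z ≠ 0 → w ≠ 0 → lEval F z w = 0 → False ∨ True := fun _ _ _ _ _ => Or.inr trivial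
  -- Nullstellensatz
  have hprime : Prime f := UniqueFactorizationMonoid.irreducible_iff_prime.mp hf_irr
  have hspan : (Ideal.span {f} : Ideal (MvPolynomial (Fin 2) ℂ)).IsPrime :=
    (Ideal.span_singleton_prime hf_ne).mpr hprime
  have hmem : X 0 * (X 1 * gP) ∈ Ideal.span {f} := by
    rw [← MvPolynomial.IsPrime.vanishingIdeal_zeroLocus (K := ℂ) (Ideal.span {f})]
    rw [MvPolynomial.mem_vanishingIdeal_iff]
    intro x hx
    show MvPolynomial.eval x (X 0 * (X 1 * gP)) = 0
    have hfx : MvPolynomial.eval x f = 0 :=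
      hx f (Ideal.subset_span (Set.mem_singleton f))
    rw [map_mul, map_mul, eval_X, eval_X]
    by_cases h0 : x 0 = 0
    · rw [h0, zero_mul]
    by_cases h1 : x 1 = 0
    · rw [h1, zero_mul, mul_zero]
    have hfun : (fun i : Fin 2 => if i = 0 then x 0 else x 1) = x := by
      funext i
      fin_cases i
      · simp
      · simp
    have hFzw : lEval F (x 0) (x 1) = 0 := by
      rw [hFrep, lEval_mul h0 h1, lEval_ι h0 h1, hfun, hfx, mul_zero]
    have hGzw : lEval G (x 0) (x 1) = 0 := hGvanish _ _ h0 h1 hFzw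
    have hgPzw : MvPolynomial.eval x gP = 0 := by
      have : lEval (ι gP) (x 0) (x 1) = 0 := by
        rw [← hgP, lEval_mul h0 h1, hGzw, mul_zero]
      rwa [lEval_ι h0 h1, hfun] at this
    rw [hgPzw, mul_zero, mul_zero]
  have hfdvd : f ∣ gP := by
    have hd : f ∣ X 0 * (X 1 * gP) := Ideal.mem_span_singleton.mp hmem
    have hnd0 : ¬ f ∣ X 0 := fun hdvd => hιf_nonunit (isUnit_of_dvd_unit (map_dvd ι hdvd)
      (by rw [ι_X0]; exact isUnit_single _ one_ne_zero))
    have hnd1 : ¬ f ∣ X 1 := fun hdvd => hιf_nonunit (isUnit_of_dvd_unit (map_dvd ι hdvd)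
      (by rw [ι_X1]; exact isUnit_single _ one_ne_zero))
    rcases hprime.2.2 _ _ hd with h | h
    · exact absurd h hnd0
    rcases hprime.2.2 _ _ h with h' | h'
    · exact absurd h' hnd1
    exact h'
  -- F divides G
  have hFdvdG : F ∣ G := by
    obtain ⟨h, hh⟩ := hfdvd
    refine ⟨AddMonoidAlgebra.single (-nG) 1 * (AddMonoidAlgebra.single (-nf) 1 * ι h), ?_⟩
    have hG' : G = AddMonoidAlgebra.single (-nG) 1 * ι gP := by
      rw [← hgP, ← mul_assoc, AddMonoidAlgebra.single_mul_single, neg_add_cancel, one_mul,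
        ← AddMonoidAlgebra.one_def, one_mul]
    have hιf : ι f = AddMonoidAlgebra.single (-nf) 1 * F := by
      rw [hFrep, ← mul_assoc, AddMonoidAlgebra.single_mul_single, neg_add_cancel, one_mul,
        ← AddMonoidAlgebra.one_def, one_mul]
    rw [hG', hh, map_mul, hιf]
    ring
  obtain ⟨c₀, hc₀⟩ := dvd_smul_of_support_subset hirr.ne_zero hFdvdG hGsupp
  refine ⟨p, q, c₀, hpq, ?_⟩
  intro m hm
  have h1 : G.coeff m = c₀ * F.coeff m := by rw [hc₀]; rfl
  rw [hGapp] at h1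
  exact mul_right_cancel₀ (Finsupp.mem_support_iff.mp hm) h1

end LogGaussAux

end

open LogGaussAux

theorem stmt_1 (F : AddMonoidAlgebra ℂ (ℤ × ℤ))
    (hirr : Irreducible F)
    (hne : ∃ z w : ℂ, z ≠ 0 ∧ w ≠ 0 ∧ lEval F z w = 0)
    (hsmooth : ∀ z w : ℂ, z ≠ 0 → w ≠ 0 → lEval F z w = 0 →
      ¬(lDlogz F z w = 0 ∧ lDlogw F z w = 0))
    (hconst : ∀ z w z' w' : ℂ, z ≠ 0 → w ≠ 0 → z' ≠ 0 → w' ≠ 0 →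
      lEval F z w = 0 → lEval F z' w' = 0 →
      lDlogz F z w * lDlogw F z' w' = lDlogz F z' w' * lDlogw F z w) :
    ∃ (a b i j : ℤ) (c u : ℂ), IsCoprime a b ∧ c ≠ 0 ∧ u ≠ 0 ∧
      F = u • (AddMonoidAlgebra.single ((i, j) : ℤ × ℤ) (1 : ℂ) *
        (AddMonoidAlgebra.single ((a, b) : ℤ × ℤ) (1 : ℂ) -
          AddMonoidAlgebra.single ((0, 0) : ℤ × ℤ) c)) := by
  classical
  obtain ⟨p, q, c₀, hpq, hline⟩ := support_on_line hirr hne hsmooth hconst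
  have hFne : F ≠ 0 := hirr.ne_zero
  -- F is not a single monomial
  have hFnotsingle : ∀ (m : ℤ × ℤ) (c : ℂ), F ≠ AddMonoidAlgebra.single m c := by
    intro m c h
    obtain ⟨z, w, hz, hw, h0⟩ := hne
    have hc : c ≠ 0 := by
      rintro rfl
      rw [show (AddMonoidAlgebra.single m (0:ℂ) : AddMonoidAlgebra ℂ (ℤ × ℤ)) = 0 from
        AddMonoidAlgebra.single_zero m] at h
      exact hFne h
    exact lEval_single_ne_zero hz hw m hc (h ▸ h0)
  obtain ⟨m₀, hm₀⟩ := supp_ne hFne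
  obtain ⟨m₁, hm₁, hm₁ne⟩ : ∃ m₁ ∈ F.coeff.support, m₁ ≠ m₀ := by
    by_contra h
    push_neg at h
    have hsub : F.coeff.support ⊆ {m₀} := fun x hx => Finset.mem_singleton.mpr (h x hx)
    exact hFnotsingle m₀ (F.coeff m₀) (AddMonoidAlgebra.ext (Finsupp.support_subset_singleton.mp hsub))
  have hlin2 : ∀ m ∈ F.coeff.support, q * ((m.1 - m₀.1 : ℤ) : ℂ) = p * ((m.2 - m₀.2 : ℤ) : ℂ) := by
    intro m hm
    have h1 := hline m hm
    have h2 := hline m₀ hm₀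
    push_cast
    linear_combination h1 - h2
  set d1 : ℤ := m₁.1 - m₀.1 with hd1def
  set d2 : ℤ := m₁.2 - m₀.2 with hd2def
  have hd0 : ¬(d1 = 0 ∧ d2 = 0) := by
    rintro ⟨h1, h2⟩
    apply hm₁ne
    apply Prod.ext <;> omega
  have hgcdne : Int.gcd d1 d2 ≠ 0 := fun h => hd0 (Int.gcd_eq_zero_iff.mp h)
  set g0 : ℤ := (Int.gcd d1 d2 : ℤ) with hg0def
  have hg0 : g0 ≠ 0 := fun h => hgcdne (by rw [hg0def] at h; exact_mod_cast h)
  set a : ℤ := d1 / g0 with hadef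
  set b : ℤ := d2 / g0 with hbdef
  have hd1 : d1 = g0 * a := (Int.mul_ediv_cancel' (Int.gcd_dvd_left _ _)).symm
  have hd2 : d2 = g0 * b := (Int.mul_ediv_cancel' (Int.gcd_dvd_right _ _)).symm
  have hab : Int.gcd a b = 1 := Int.gcd_div_gcd_div_gcd (Nat.pos_of_ne_zero hgcdne)
  have hcop : IsCoprime a b := Int.isCoprime_iff_gcd_eq_one.mpr hab
  have hpq' : p ≠ 0 ∨ q ≠ 0 := by tauto
  have hkey : ∀ m ∈ F.coeff.support, ∃ k : ℤ, m.1 - m₀.1 = k * a ∧ m.2 - m₀.2 = k * b := by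
    intro m hm
    have h1 := hlin2 m hm
    have h2 := hlin2 m₁ hm₁
    rw [← hd1def, ← hd2def] at h2
    push_cast at h1
    have hC : ((m.1 - m₀.1 : ℤ) : ℂ) * (d2 : ℂ) = ((m.2 - m₀.2 : ℤ) : ℂ) * (d1 : ℂ) := by
      push_cast
      rcases hpq' with hp | hq
      · apply mul_left_cancel₀ hp
        linear_combination (d1 : ℂ) * h1 - ((m.1 : ℂ) - (m₀.1 : ℂ)) * h2
      · apply mul_left_cancel₀ hq
        linear_combination (d2 : ℂ) * h1 - ((m.2 : ℂ) - (m₀.2 : ℂ)) * h2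
    have hZ : (m.1 - m₀.1) * d2 = (m.2 - m₀.2) * d1 := by exact_mod_cast hC
    rw [hd1, hd2] at hZ
    have hXb : (m.1 - m₀.1) * b = (m.2 - m₀.2) * a := by
      have hgz : g0 * ((m.1 - m₀.1) * b) = g0 * ((m.2 - m₀.2) * a) := by
        linear_combination hZ
      exact mul_left_cancel₀ hg0 hgz
    obtain ⟨u, v, huv⟩ := hcop
    refine ⟨u * (m.1 - m₀.1) + v * (m.2 - m₀.2), ?_, ?_⟩
    · linear_combination (-(m.1 - m₀.1)) * huv + v * hXb
    · linear_combination (-(m.2 - m₀.2)) * huv - u * hXb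
  have habne : ¬(a = 0 ∧ b = 0) := by
    rintro ⟨h1, h2⟩
    rw [h1, h2] at hab
    simp at hab
  -- the embedding of ℤ into ℤ² along (a,b)
  set e' : ℤ →+ ℤ × ℤ := AddMonoidHom.mk' (fun k => (k * a, k * b))
    (fun k l => by simp [Prod.ext_iff]; constructor <;> ring) with he'def
  have he'app : ∀ k : ℤ, e' k = (k * a, k * b) := fun k => rfl
  have he'inj : Function.Injective e' := by
    intro k l h
    rw [he'app, he'app, Prod.ext_iff] at h
    obtain ⟨h1, h2⟩ := h
    by_cases ha : a = 0
    · have hb : b ≠ 0 := fun hb => habne ⟨ha, hb⟩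
      exact mul_right_cancel₀ hb h2
    · exact mul_right_cancel₀ ha h1
  set F' : AddMonoidAlgebra ℂ (ℤ × ℤ) := AddMonoidAlgebra.single (-m₀) (1:ℂ) * F with hF'def
  have hF'supp : ↑F'.coeff.support ⊆ Set.range e' := by
    intro x hx
    have hx' : x ∈ F'.coeff.support := hx
    rw [hF'def, single_mul_eq_mapDomain] at hx'
    obtain ⟨m, hm, rfl⟩ := Finset.mem_image.mp (Finsupp.mapDomain_support hx')
    obtain ⟨k, hk1, hk2⟩ := hkey m hm
    refine ⟨k, ?_⟩
    rw [he'app, Prod.ext_iff]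
    constructor
    · show k * a = -m₀.1 + m.1
      omega
    · show k * b = -m₀.2 + m.2
      omega
  set g : AddMonoidAlgebra ℂ ℤ := AddMonoidAlgebra.comapDomain e' he'inj F' with hgdef
  have hψg : AddMonoidAlgebra.mapDomain e' g = F' :=
    AddMonoidAlgebra.mapDomain_comapDomain hF'supp he'inj
  set ψ : AddMonoidAlgebra ℂ ℤ →+* AddMonoidAlgebra ℂ (ℤ × ℤ) :=
    AddMonoidAlgebra.mapDomainRingHom ℂ e' with hψdef
  have hψapp : ∀ Y : AddMonoidAlgebra ℂ ℤ, ψ Y = AddMonoidAlgebra.mapDomain e' Y := fun _ => rfl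
  have hψg' : ψ g = F' := hψg
  have hFψ : F = AddMonoidAlgebra.single m₀ 1 * ψ g := by
    rw [hψg', hF'def, ← mul_assoc, AddMonoidAlgebra.single_mul_single, add_neg_cancel, one_mul,
      ← AddMonoidAlgebra.one_def, one_mul]
  have hF'irr : Irreducible F' := by
    obtain ⟨u, hu⟩ := isUnit_single (-m₀) (one_ne_zero : (1:ℂ) ≠ 0)
    exact Associated.irreducible ⟨u, by rw [hu, hF'def]; ring⟩ hirr
  have hψunit : ∀ Y : AddMonoidAlgebra ℂ ℤ, IsUnit (ψ Y) → IsUnit Y := by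
    intro Y hY
    obtain ⟨m, c, hc, hYs⟩ := unit_is_single hY
    have hYne : Y ≠ 0 := by
      rintro rfl
      rw [map_zero] at hYs
      exact hc (by simpa using hYs.symm)
    obtain ⟨k, hk⟩ := supp_ne hYne
    have hsuppY : (ψ Y).coeff.support = Y.coeff.support.image e' := by
      rw [hψapp]
      exact Finsupp.mapDomain_support_of_injective he'inj _
    have hsing : (ψ Y).coeff.support = {m} := by
      rw [hYs]
      exact Finsupp.support_single_ne_zero _ hc
    have hsub : Y.coeff.support ⊆ {k} := by
      intro k' hk'
      have h1 : e' k' ∈ (ψ Y).coeff.support := by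
        rw [hsuppY]; exact Finset.mem_image_of_mem _ hk'
      have h2 : e' k ∈ (ψ Y).coeff.support := by
        rw [hsuppY]; exact Finset.mem_image_of_mem _ hk
      rw [hsing, Finset.mem_singleton] at h1 h2
      rw [Finset.mem_singleton]
      exact he'inj (h1.trans h2.symm)
    have hYsingle : Y = AddMonoidAlgebra.single k (Y.coeff k) :=
      AddMonoidAlgebra.ext (Finsupp.support_subset_singleton.mp hsub)
    rw [hYsingle]
    exact isUnit_single k (Finsupp.mem_support_iff.mp hk)
  have hg_irr : Irreducible g := by
    constructor
    · intro h
      exact hF'irr.not_isUnit (hψg' ▸ h.map ψ)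
    · intro g₁ g₂ hgeq
      have hfac : F' = ψ g₁ * ψ g₂ := by rw [← hψg', hgeq, map_mul]
      rcases hF'irr.isUnit_or_isUnit hfac with h | h
      · exact Or.inl (hψunit _ h)
      · exact Or.inr (hψunit _ h)
  have hgne : g ≠ 0 := hg_irr.ne_zero
  -- Laurent endgame
  obtain ⟨nT, pX, hpX⟩ := LaurentPolynomial.exists_T_pow g
  have hpXne : pX ≠ 0 := by
    rintro rfl
    rw [map_zero] at hpX
    apply hgne
    obtain ⟨u, hu⟩ := LaurentPolynomial.isUnit_T (R := ℂ) nT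
    calc g = g * (↑u * ↑u⁻¹) := by rw [Units.mul_inv, mul_one]
      _ = (g * ↑u) * ↑u⁻¹ := (mul_assoc _ _ _).symm
      _ = 0 * ↑u⁻¹ := by rw [hu, ← hpX]
      _ = 0 := zero_mul _
  obtain ⟨γ, r, hXr, hpr⟩ := WfDvdMonoid.max_power_factor hpXne Polynomial.irreducible_X
  have hrne : r ≠ 0 := by rintro rfl; rw [mul_zero] at hpr; exact hpXne hpr
  have hrLaurent : Polynomial.toLaurent r = g * LaurentPolynomial.T ((nT : ℤ) - γ) := by
    have h1 : Polynomial.toLaurent pX = LaurentPolynomial.T γ * Polynomial.toLaurent r := by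
      rw [hpr, map_mul, map_pow, Polynomial.toLaurent_X, LaurentPolynomial.T_pow, mul_one]
    have h2 : LaurentPolynomial.T (γ : ℤ) * Polynomial.toLaurent r
        = g * LaurentPolynomial.T (nT : ℤ) := by rw [← h1, hpX]
    calc Polynomial.toLaurent r
        = LaurentPolynomial.T (-(γ : ℤ)) * (LaurentPolynomial.T (γ : ℤ)
            * Polynomial.toLaurent r) := by
          rw [← mul_assoc, ← LaurentPolynomial.T_add, neg_add_cancel, LaurentPolynomial.T_zero,
            one_mul]
      _ = LaurentPolynomial.T (-(γ : ℤ)) * (g * LaurentPolynomial.T (nT : ℤ)) := by rw [h2]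
      _ = g * (LaurentPolynomial.T ((nT : ℤ)) * LaurentPolynomial.T (-(γ:ℤ))) := by ring
      _ = g * LaurentPolynomial.T ((nT : ℤ) - γ) := by
          rw [← LaurentPolynomial.T_add, ← sub_eq_add_neg]
  have hgr : g = Polynomial.toLaurent r * LaurentPolynomial.T ((γ : ℤ) - nT) := by
    rw [hrLaurent, mul_assoc, ← LaurentPolynomial.T_add]
    rw [show (nT : ℤ) - γ + ((γ : ℤ) - nT) = 0 by ring, LaurentPolynomial.T_zero, mul_one]
  by_cases hdeg : r.natDegree = 0
  · exfalso
    obtain ⟨dc, hdc⟩ := Polynomial.natDegree_eq_zero.mp hdeg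
    have hgs : g = AddMonoidAlgebra.single ((γ : ℤ) - nT) dc := by
      rw [hgr, ← hdc, Polynomial.toLaurent_C]
      show LaurentPolynomial.C dc * LaurentPolynomial.T ((γ:ℤ) - nT) = _
      rw [← LaurentPolynomial.single_eq_C]
      show (AddMonoidAlgebra.single (0:ℤ) dc : AddMonoidAlgebra ℂ ℤ)
          * AddMonoidAlgebra.single ((γ:ℤ) - nT) 1 = _
      rw [AddMonoidAlgebra.single_mul_single, zero_add, mul_one]
    apply hFnotsingle (m₀ + e' ((γ:ℤ) - nT)) dc
    rw [hFψ, hgs, hψapp, AddMonoidAlgebra.mapDomain_single]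
    show AddMonoidAlgebra.single m₀ 1 * AddMonoidAlgebra.single (e' ((γ:ℤ) - nT)) dc = _
    rw [AddMonoidAlgebra.single_mul_single, one_mul]
  · have hdeg' : r.degree ≠ 0 := by
      rw [Polynomial.degree_eq_natDegree hrne]
      exact_mod_cast hdeg
    obtain ⟨c, hc⟩ := IsAlgClosed.exists_root r hdeg'
    have hcne : c ≠ 0 := by
      rintro rfl
      apply hXr
      have hdv := Polynomial.dvd_iff_isRoot.mpr hc
      simpa using hdv
    obtain ⟨s, hs⟩ := Polynomial.dvd_iff_isRoot.mpr hc
    have hgfact : g = (LaurentPolynomial.T 1 - LaurentPolynomial.C c)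
        * (Polynomial.toLaurent s * LaurentPolynomial.T ((γ:ℤ) - nT)) := by
      rw [hgr, hs, map_mul, map_sub, Polynomial.toLaurent_X, Polynomial.toLaurent_C, mul_assoc]
    have hTCnotunit : ¬ IsUnit (LaurentPolynomial.T 1 - LaurentPolynomial.C c
        : LaurentPolynomial ℂ) := by
      intro h
      obtain ⟨k, d, hd, hTd⟩ := unit_is_single_int h
      have h1 : (LaurentPolynomial.T 1 - LaurentPolynomial.C c : LaurentPolynomial ℂ).coeff 1 = 1 := by
        show (AddMonoidAlgebra.single (1:ℤ) (1:ℂ) - AddMonoidAlgebra.single (0:ℤ) c).coeff 1 = 1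
        rw [AddMonoidAlgebra.coeff_sub, Finsupp.sub_apply]
        simp [Finsupp.single_apply]
      have h0 : (LaurentPolynomial.T 1 - LaurentPolynomial.C c : LaurentPolynomial ℂ).coeff 0 = -c := by
        show (AddMonoidAlgebra.single (1:ℤ) (1:ℂ) - AddMonoidAlgebra.single (0:ℤ) c).coeff 0 = -c
        rw [AddMonoidAlgebra.coeff_sub, Finsupp.sub_apply]
        simp [Finsupp.single_apply]
      rw [hTd] at h1 h0
      by_cases hk : k = 1
      · subst hk
        rw [AddMonoidAlgebra.coeff_single, Finsupp.single_apply, if_neg (by norm_num)] at h0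
        exact hcne (neg_eq_zero.mp h0.symm)
      · rw [AddMonoidAlgebra.coeff_single, Finsupp.single_apply, if_neg hk] at h1
        exact one_ne_zero h1.symm
    rcases hg_irr.isUnit_or_isUnit hgfact with h | h
    · exact absurd h hTCnotunit
    obtain ⟨k, d, hd, hkd⟩ := unit_is_single_int h
    refine ⟨a, b, m₀.1 + k * a, m₀.2 + k * b, c, d, hcop, hcne, hd, ?_⟩
    have hψsingle : ∀ (s : ℤ) (x : ℂ),
        ψ (AddMonoidAlgebra.single s x) = AddMonoidAlgebra.single (e' s) x := by
      intro s x
      rw [hψapp, AddMonoidAlgebra.mapDomain_single]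
    have hgψ : ψ g = (AddMonoidAlgebra.single ((a, b) : ℤ × ℤ) (1:ℂ)
        - AddMonoidAlgebra.single ((0, 0) : ℤ × ℤ) c)
        * AddMonoidAlgebra.single ((k * a, k * b) : ℤ × ℤ) d := by
      rw [hgfact, hkd, map_mul, map_sub]
      rw [show (LaurentPolynomial.T 1 : LaurentPolynomial ℂ) = AddMonoidAlgebra.single (1:ℤ) 1 from rfl,
          show (LaurentPolynomial.C c : LaurentPolynomial ℂ) = AddMonoidAlgebra.single (0:ℤ) c from rfl,
          hψsingle, hψsingle, hψsingle]
      rw [show e' 1 = ((a, b) : ℤ × ℤ) from by rw [he'app, one_mul, one_mul],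
          show e' 0 = ((0, 0) : ℤ × ℤ) from by rw [he'app, zero_mul, zero_mul],
          he'app]
    rw [hFψ, hgψ]
    have hsmul : (d • (AddMonoidAlgebra.single ((m₀.1 + k * a, m₀.2 + k * b) : ℤ × ℤ) (1:ℂ))
        : AddMonoidAlgebra ℂ (ℤ × ℤ))
        = AddMonoidAlgebra.single ((m₀.1 + k * a, m₀.2 + k * b) : ℤ × ℤ) d := by
      rw [AddMonoidAlgebra.smul_single, smul_eq_mul, mul_one]
    rw [← smul_mul_assoc, hsmul]
    rw [show AddMonoidAlgebra.single ((m₀.1 + k * a, m₀.2 + k * b) : ℤ × ℤ) d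
        = AddMonoidAlgebra.single m₀ 1 * AddMonoidAlgebra.single ((k * a, k * b) : ℤ × ℤ) d
        from by
          rw [AddMonoidAlgebra.single_mul_single, one_mul]
          congr 1]
    ring
end

section
/- For f(z,w) = 1 + z + w + α·zw with α ∈ ℂ \ {0,1}, the critical parameters of the rational map t ↦ t(1+t)(1−α)/(1 + t(1−α)) are exactly the roots of t²(1−α) + 2t + 1 = 0, namely t_± = (1 ± √α)/(α − 1), and one of t_+ , t_− is real if and only if α ∈ ℝ_{≥0}. -/
/- STATEMENT 8: for α ∈ ℂ \ {0,1}, the critical parameters of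
g(t) = t(1+t)(1−α)/(1 + t(1−α)) are exactly the roots of (1−α)t² + 2t + 1 = 0,
namely t_± = (1 ± √α)/(α − 1) (for either square root √α of α), and at least one
of t_± is real if and only if α ∈ ℝ_{≥0}. -/
theorem stmt_8 (α : ℂ) (hα0 : α ≠ 0) (hα1 : α ≠ 1) :
    (∀ t : ℂ, 1 + t * (1 - α) ≠ 0 →
      (deriv (fun t' : ℂ => t' * (1 + t') * (1 - α) / (1 + t' * (1 - α))) t = 0 ↔
        (1 - α) * t ^ 2 + 2 * t + 1 = 0)) ∧
    (∀ s : ℂ, s ^ 2 = α → ∀ t : ℂ,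
      ((1 - α) * t ^ 2 + 2 * t + 1 = 0 ↔
        t = (1 + s) / (α - 1) ∨ t = (1 - s) / (α - 1))) ∧
    ((∃ t : ℝ, (1 - α) * (t : ℂ) ^ 2 + 2 * (t : ℂ) + 1 = 0) ↔
      (∃ x : ℝ, 0 ≤ x ∧ (x : ℂ) = α)) := by
  have hc : (1 : ℂ) - α ≠ 0 := sub_ne_zero.mpr (Ne.symm hα1)
  have hA : α - 1 ≠ 0 := sub_ne_zero.mpr hα1
  refine ⟨?_, ?_, ?_⟩
  · intro t ht
    have h1 : HasDerivAt (fun t' : ℂ => t' * (1 + t') * (1 - α))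
        ((1 + 2 * t) * (1 - α)) t := by
      have := ((hasDerivAt_id t).mul ((hasDerivAt_const t (1:ℂ)).add
        (hasDerivAt_id t))).mul_const (1 - α)
      simp only [id_eq] at this
      refine this.congr_deriv ?_
      show (1 * (1 + t) + t * (0 + 1)) * (1 - α) = (1 + 2 * t) * (1 - α)
      ring
    have h2 : HasDerivAt (fun t' : ℂ => 1 + t' * (1 - α)) (1 - α) t := by
      have := ((hasDerivAt_id t).mul_const (1 - α)).const_add (1 : ℂ)
      refine this.congr_deriv ?_
      ring
    have h3 : HasDerivAt (fun t' : ℂ => t' * (1 + t') * (1 - α) / (1 + t' * (1 - α))) _ t := h1.div h2 ht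
    rw [h3.deriv]
    rw [div_eq_zero_iff]
    constructor
    · rintro (h | h)
      · have : (1 - α) * ((1 - α) * t ^ 2 + 2 * t + 1) = 0 := by
          linear_combination h
        rcases mul_eq_zero.mp this with h' | h'
        · exact absurd h' hc
        · exact h'
      · exact absurd h (pow_ne_zero 2 ht)
    · intro h
      left
      linear_combination (1 - α) * h
  · intro s hs t
    constructor
    · intro h
      have key : ((α - 1) * t - (1 + s)) * ((α - 1) * t - (1 - s)) = 0 := by
        linear_combination (1 - α) * h - hs
      rcases mul_eq_zero.mp key with h1 | h1
      · left
        field_simp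
        linear_combination h1
      · right
        field_simp
        linear_combination h1
    · rintro (rfl | rfl)
      · field_simp
        linear_combination (-(α - 1)) * hs
      · field_simp
        linear_combination (-(α - 1)) * hs
  · constructor
    · rintro ⟨t, ht⟩
      have ht0 : (t : ℂ) ≠ 0 := by
        intro h0
        rw [h0] at ht
        simp at ht
      refine ⟨((t + 1) / t) ^ 2, sq_nonneg _, ?_⟩
      have htr : (t : ℝ) ≠ 0 := by exact_mod_cast ht0
      push_cast
      rw [div_pow, div_eq_iff (pow_ne_zero 2 ht0)]
      linear_combination ht
    · rintro ⟨x, hx0, rfl⟩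
      have hx1 : (x : ℝ) ≠ 1 := by
        intro h; apply hα1; exact_mod_cast h
      have hs : (Real.sqrt x : ℂ) ^ 2 = (x : ℂ) := by
        rw [← Complex.ofReal_pow, Real.sq_sqrt hx0]
      refine ⟨(1 + Real.sqrt x) / (x - 1), ?_⟩
      have hd : ((x : ℝ) - 1) ≠ 0 := sub_ne_zero.mpr hx1
      have hdC : ((x : ℂ) - 1) ≠ 0 := by exact_mod_cast hd
      push_cast
      field_simp
      linear_combination (-((x:ℂ) - 1)) * hs
end

section
/- For f_α(z,w) = 1 + z + w + α·zw − α·z² with α ∈ ℂ \ {0,1,2} and the parametrization z(t) = (−1−t+α)/(αt−α), w(t) = (−(1+t)t+α)/(αt−α), the logarithmic Gauss map satisfies γ_{f_α}(t) = [(α − 2t − 1 + t²)(1 + t − α) : (α − 2)(α − t − t²)] ∈ ℙ¹(ℂ), i.e., z(t)·∂_z f_α and w(t)·∂_w f_α at the parametrized point are proportional to these two expressions. -/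
/- STATEMENT 15: for f_α(z,w) = 1 + z + w + α·zw − α·z², α ∈ ℂ \ {0,1,2}, and the
parametrization z(t) = (−1−t+α)/(αt−α), w(t) = (−(1+t)t+α)/(αt−α) of V(f_α), the
logarithmic Gauss map satisfies
γ_{f_α}(t) = [(α − 2t − 1 + t²)(1 + t − α) : (α − 2)(α − t − t²)]: the vector
(z·∂_z f_α, w·∂_w f_α) at the parametrized point is a nonzero scalar multiple of
((α − 2t − 1 + t²)(1 + t − α), (α − 2)(α − t − t²)). -/
theorem stmt_15 (α : ℂ) (hα0 : α ≠ 0) (hα1 : α ≠ 1) (hα2 : α ≠ 2) (t : ℂ)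
    (hden : α * t - α ≠ 0)
    (z w : ℂ) (hzdef : z = (-1 - t + α) / (α * t - α))
    (hwdef : w = (-(1 + t) * t + α) / (α * t - α))
    (hz : z ≠ 0) (hw : w ≠ 0) :
    ∃ lam : ℂ, lam ≠ 0 ∧
      z * deriv (fun z' : ℂ => 1 + z' + w + α * z' * w - α * z' ^ 2) z =
        lam * ((α - 2 * t - 1 + t ^ 2) * (1 + t - α)) ∧
      w * deriv (fun w' : ℂ => 1 + z + w' + α * z * w' - α * z ^ 2) w =
        lam * ((α - 2) * (α - t - t ^ 2)) := by
  have hd1 : deriv (fun z' : ℂ => 1 + z' + w + α * z' * w - α * z' ^ 2) z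
      = 1 + α * w - 2 * α * z := by
    have hfun : (fun z' : ℂ => 1 + z' + w + α * z' * w - α * z' ^ 2)
        = fun z' : ℂ => -α * z' ^ 2 + ((1 + α * w) * z' + (1 + w)) := by
      funext x; ring
    rw [hfun]
    have h2 : HasDerivAt (fun x : ℂ => x ^ 2) (2 * z) z := by
      simpa using hasDerivAt_pow 2 z
    have hq : HasDerivAt (fun z' : ℂ => -α * z' ^ 2 + ((1 + α * w) * z' + (1 + w)))
        (-α * (2 * z) + ((1 + α * w) * 1 + 0)) z := by
      exact (h2.const_mul (-α)).add
        (((hasDerivAt_id z).const_mul (1 + α * w)).add (hasDerivAt_const z (1 + w)))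
    rw [hq.deriv]; ring
  have hd2 : deriv (fun w' : ℂ => 1 + z + w' + α * z * w' - α * z ^ 2) w
      = 1 + α * z := by
    have hfun : (fun w' : ℂ => 1 + z + w' + α * z * w' - α * z ^ 2)
        = fun w' : ℂ => (1 + α * z) * w' + (1 + z - α * z ^ 2) := by
      funext x; ring
    rw [hfun]
    have hq : HasDerivAt (fun w' : ℂ => (1 + α * z) * w' + (1 + z - α * z ^ 2))
        ((1 + α * z) * 1 + 0) w :=
      ((hasDerivAt_id w).const_mul (1 + α * z)).add (hasDerivAt_const w (1 + z - α * z ^ 2))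
    rw [hq.deriv]; ring
  refine ⟨α / (α * t - α) ^ 2, ?_, ?_, ?_⟩
  · exact div_ne_zero hα0 (pow_ne_zero 2 hden)
  · rw [hd1, hzdef, hwdef]
    have ht1 : t - 1 ≠ 0 := by
      intro h; apply hden; rw [show α * t - α = α * (t - 1) by ring, h, mul_zero]
    field_simp
    ring
  · rw [hd2, hzdef, hwdef]
    have ht1 : t - 1 ≠ 0 := by
      intro h; apply hden; rw [show α * t - α = α * (t - 1) by ring, h, mul_zero]
    field_simp
    ring
end
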